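/- Let N = R₁R₂, gcd(R₁,R₂) = 1, χ₁, χ₂ multiplicative characters on Z/R₁, Z/R₂ with χ₂ primitive, and χ the corresponding character on Z/N. Then the R₁×R₂ finite Zak transform X_{R₂}(j,k) = Σ_{r=0}^{R₂−1} χ(k + rR₁) e^{2πi jr/R₂} satisfies X_{R₂}(j,k) = G(χ₂)·χ₂(R₁)·e^{−2πi R₁^{-1}jk/R₂}·χ₂*(j)·χ₁(k) for 0 ≤ j < R₂, 0 ≤ k < R₁, where R₁^{-1} is the inverse of R₁ mod R₂. -/

import Mathlib

open Finset

/-- The `N`-point discrete Fourier transform of `x : ZMod N → ℂ`. -/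
noncomputable def dft {N : ℕ} [NeZero N] (x : ZMod N → ℂ) (a : ZMod N) : ℂ :=
  ∑ b : ZMod N, x b * Complex.exp (2 * Real.pi * Complex.I * ((a.val * b.val : ℕ) : ℂ) / (N : ℂ))

noncomputable def eN (n m : ℕ) : ℂ :=
  Complex.exp (2 * Real.pi * Complex.I * (m : ℂ) / (n : ℂ))

lemma eN_add (n m₁ m₂ : ℕ) : eN n (m₁ + m₂) = eN n m₁ * eN n m₂ := by
  rw [eN, eN, eN, ← Complex.exp_add]
  congr 1
  push_cast
  ring

lemma eN_nat_mul (n : ℕ) [NeZero n] (q : ℕ) : eN n (n * q) = 1 := by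
  have hn : (n : ℂ) ≠ 0 := Nat.cast_ne_zero.mpr (NeZero.ne n)
  rw [eN]
  have : 2 * Real.pi * Complex.I * ((n * q : ℕ) : ℂ) / (n : ℂ) = (q : ℕ) * (2 * Real.pi * Complex.I) := by
    push_cast; field_simp
  rw [this, Complex.exp_nat_mul_two_pi_mul_I]

lemma eN_mod (n : ℕ) [NeZero n] (m : ℕ) : eN n m = eN n (m % n) := by
  conv_lhs => rw [← Nat.mod_add_div m n]
  rw [eN_add, eN_nat_mul, mul_one]

noncomputable def E (n : ℕ) [NeZero n] (a : ZMod n) : ℂ := eN n a.val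

lemma E_natCast (n : ℕ) [NeZero n] (m : ℕ) : E n (m : ZMod n) = eN n m := by
  rw [E, ZMod.val_natCast, ← eN_mod]

lemma E_add (n : ℕ) [NeZero n] (a b : ZMod n) : E n (a + b) = E n a * E n b := by
  have h : a + b = ((a.val + b.val : ℕ) : ZMod n) := by
    push_cast [ZMod.natCast_val, ZMod.cast_id]
    rfl
  rw [h, E_natCast, eN_add, E, E]

lemma E_mul (n : ℕ) [NeZero n] (a b : ZMod n) : E n (a * b) = eN n (a.val * b.val) := by
  have h : a * b = ((a.val * b.val : ℕ) : ZMod n) := by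
    push_cast [ZMod.natCast_val, ZMod.cast_id]
    rfl
  rw [h, E_natCast]

lemma E_ne_zero (n : ℕ) [NeZero n] (a : ZMod n) : E n a ≠ 0 := Complex.exp_ne_zero _

lemma E_zero (n : ℕ) [NeZero n] : E n 0 = 1 := by
  rw [E, ZMod.val_zero, eN]; simp

lemma E_neg (n : ℕ) [NeZero n] (a : ZMod n) : E n (-a) = (E n a)⁻¹ := by
  have := E_add n (-a) a
  rw [neg_add_cancel, E_zero] at this
  exact (inv_eq_of_mul_eq_one_left this.symm).symm

lemma dft_eq {N : ℕ} [NeZero N] (x : ZMod N → ℂ) (a : ZMod N) :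
    dft x a = ∑ b : ZMod N, x b * E N (a * b) := by
  unfold dft
  refine Finset.sum_congr rfl fun b _ => ?_
  rw [E_mul, eN]

theorem stmt15 (R₁ R₂ : ℕ) [NeZero R₁] [NeZero R₂] (h : Nat.Coprime R₁ R₂)
    (χ₁ : MulChar (ZMod R₁) ℂ) (χ₂ : MulChar (ZMod R₂) ℂ)
    (χ : MulChar (ZMod (R₁ * R₂)) ℂ)
    (hχ : ∀ a : ZMod (R₁ * R₂),
      χ a = χ₁ (ZMod.castHom (dvd_mul_right R₁ R₂) (ZMod R₁) a) *
            χ₂ (ZMod.castHom (dvd_mul_left R₂ R₁) (ZMod R₂) a))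
    (hprim : ∀ j : ZMod R₂, dft ⇑χ₂ j = dft ⇑χ₂ 1 * χ₂⁻¹ j)
    (j k : ℕ) (hj : j < R₂) (hk : k < R₁) :
    ∑ r ∈ Finset.range R₂, χ ((k + r * R₁ : ℕ) : ZMod (R₁ * R₂)) *
        Complex.exp (2 * Real.pi * Complex.I * ((j * r : ℕ) : ℂ) / (R₂ : ℂ)) =
      dft ⇑χ₂ 1 * χ₂ ((R₁ : ℕ) : ZMod R₂) *
        Complex.exp (-(2 * Real.pi * Complex.I *
          (((((R₁ : ZMod R₂)⁻¹).val * j * k : ℕ)) : ℂ) / (R₂ : ℂ))) *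
        χ₂⁻¹ ((j : ℕ) : ZMod R₂) * χ₁ ((k : ℕ) : ZMod R₁) := by
  set u : ZMod R₂ := ((R₁ : ℕ) : ZMod R₂)⁻¹ with hu_def
  have hunit : IsUnit ((R₁ : ℕ) : ZMod R₂) := (ZMod.isUnit_iff_coprime R₁ R₂).mpr h
  have hu : u * ((R₁ : ℕ) : ZMod R₂) = 1 := ZMod.inv_mul_of_unit _ hunit
  set jm : ZMod R₂ := ((j : ℕ) : ZMod R₂) with hjm
  set km : ZMod R₂ := ((k : ℕ) : ZMod R₂) with hkm
  set g : ZMod R₂ → ℂ := fun b =>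
    χ₁ ((k : ℕ) : ZMod R₁) * χ₂ b * E R₂ (jm * u * (b - km)) with hg
  have step1 : ∑ r ∈ Finset.range R₂, χ ((k + r * R₁ : ℕ) : ZMod (R₁ * R₂)) *
      Complex.exp (2 * Real.pi * Complex.I * ((j * r : ℕ) : ℂ) / (R₂ : ℂ)) =
      ∑ b : ZMod R₂, g b := by
    refine Finset.sum_nbij' (fun r => ((k + r * R₁ : ℕ) : ZMod R₂))
      (fun b => (u * (b - km)).val) (fun r _ => Finset.mem_univ _)
      (fun b _ => Finset.mem_range.mpr (ZMod.val_lt _)) ?_ ?_ ?_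
    · intro r hr
      have hb : ((k + r * R₁ : ℕ) : ZMod R₂) - km = (r : ZMod R₂) * ((R₁ : ℕ) : ZMod R₂) := by
        push_cast; ring
      rw [hb, show u * ((r : ZMod R₂) * ((R₁ : ℕ) : ZMod R₂)) =
        (u * ((R₁ : ℕ) : ZMod R₂)) * (r : ZMod R₂) by ring, hu, one_mul,
        ZMod.val_natCast, Nat.mod_eq_of_lt (Finset.mem_range.mp hr)]
    · intro b _
      have : ((k + (u * (b - km)).val * R₁ : ℕ) : ZMod R₂) =
          km + (u * (b - km)) * ((R₁ : ℕ) : ZMod R₂) := by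
        push_cast [ZMod.natCast_val, ZMod.cast_id]
        rfl
      rw [this, show km + u * (b - km) * ((R₁ : ℕ) : ZMod R₂) =
        km + (u * ((R₁ : ℕ) : ZMod R₂)) * (b - km) by ring, hu, one_mul]
      ring
    · intro r hr
      have hχ' : χ ((k + r * R₁ : ℕ) : ZMod (R₁ * R₂)) =
          χ₁ ((k : ℕ) : ZMod R₁) * χ₂ (((k + r * R₁ : ℕ) : ZMod R₂)) := by
        rw [hχ]
        congr 1
        · congr 1
          rw [map_natCast]
          push_cast [ZMod.natCast_self]
          ring
        · congr 1
          rw [map_natCast]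
      have hb : ((k + r * R₁ : ℕ) : ZMod R₂) - km = (r : ZMod R₂) * ((R₁ : ℕ) : ZMod R₂) := by
        push_cast; ring
      have hE : E R₂ (jm * u * (((k + r * R₁ : ℕ) : ZMod R₂) - km)) =
          Complex.exp (2 * Real.pi * Complex.I * ((j * r : ℕ) : ℂ) / (R₂ : ℂ)) := by
        rw [hb, show jm * u * ((r : ZMod R₂) * ((R₁ : ℕ) : ZMod R₂)) =
          jm * (r : ZMod R₂) * (u * ((R₁ : ℕ) : ZMod R₂)) by ring, hu, mul_one,
          show jm * (r : ZMod R₂) = ((j * r : ℕ) : ZMod R₂) by push_cast; rfl,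
          E_natCast, eN]
      rw [hχ', hg]
      simp only []
      rw [hE]
  rw [step1]
  have step2 : ∀ b : ZMod R₂, g b = (χ₁ ((k : ℕ) : ZMod R₁) * E R₂ (-(jm * u * km))) *
      (χ₂ b * E R₂ ((jm * u) * b)) := by
    intro b
    rw [hg]
    simp only []
    rw [show jm * u * (b - km) = (jm * u) * b + (-(jm * u * km)) by ring, E_add]
    ring
  rw [Finset.sum_congr rfl (fun b _ => step2 b), ← Finset.mul_sum]
  have step3 : ∑ b : ZMod R₂, χ₂ b * E R₂ ((jm * u) * b) = dft ⇑χ₂ (jm * u) := by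
    rw [dft_eq]
  rw [step3, hprim]
  have step4 : χ₂⁻¹ (jm * u) = χ₂⁻¹ jm * χ₂ ((R₁ : ℕ) : ZMod R₂) := by
    rw [map_mul]
    congr 1
    rw [MulChar.inv_apply_eq_inv']
    exact inv_eq_of_mul_eq_one_right (by rw [← map_mul, hu, map_one])
  rw [step4]
  have step5 : E R₂ (-(jm * u * km)) =
      Complex.exp (-(2 * Real.pi * Complex.I *
        (((((R₁ : ZMod R₂)⁻¹).val * j * k : ℕ)) : ℂ) / (R₂ : ℂ))) := by
    have hM : jm * u * km = ((u.val * j * k : ℕ) : ZMod R₂) := by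
      push_cast [ZMod.natCast_val, ZMod.cast_id]
      ring
    rw [hM, E_neg, E_natCast, ← hu_def, eN, ← Complex.exp_neg]
  rw [step5]
  ring
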